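/- In the center of the integral group algebra of the symmetric group S_n (n ≥ 0), the square of the sum T of all transpositions equals 2·X_{(1,1)} + 3·X_{(2)} + C(n,2)·1, where X_{(1,1)} is the sum of all products of two disjoint transpositions, X_{(2)} is the sum of all 3-cycles, and C(n,2) = n(n-1)/2. -/

import Mathlib

section MyAux

open Finset Equiv Equiv.Perm



lemma mySum0 {m : Multiset ℕ} (h2 : ∀ x ∈ m, 2 ≤ x) (h : m.sum = 0) : m = 0 := by
  by_contra hm
  obtain ⟨a, ha⟩ := Multiset.exists_mem_of_ne_zero hm
  have h1 := Multiset.le_sum_of_mem ha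
  have := h2 a ha
  omega

lemma mySum2 {m : Multiset ℕ} (h2 : ∀ x ∈ m, 2 ≤ x) (h : m.sum = 2) : m = {2} := by
  obtain ⟨a, ha⟩ := Multiset.exists_mem_of_ne_zero (show m ≠ 0 by rintro rfl; simp at h)
  obtain ⟨m', rfl⟩ := Multiset.exists_cons_of_mem ha
  rw [Multiset.sum_cons] at h
  have ha2 := h2 a (Multiset.mem_cons_self a m')
  have hm' : m' = 0 := mySum0 (fun x hx => h2 x (Multiset.mem_cons_of_mem hx)) (by omega)
  subst hm'
  have : a = 2 := by simpa using h
  rw [this]; rfl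

lemma mySum3 {m : Multiset ℕ} (h2 : ∀ x ∈ m, 2 ≤ x) (h : m.sum = 3) : m = {3} := by
  obtain ⟨a, ha⟩ := Multiset.exists_mem_of_ne_zero (show m ≠ 0 by rintro rfl; simp at h)
  obtain ⟨m', rfl⟩ := Multiset.exists_cons_of_mem ha
  rw [Multiset.sum_cons] at h
  have ha2 := h2 a (Multiset.mem_cons_self a m')
  have h2' : ∀ x ∈ m', 2 ≤ x := fun x hx => h2 x (Multiset.mem_cons_of_mem hx)
  have hs' : m'.sum = 0 ∨ m'.sum = 1 := by omega
  rcases hs' with hs' | hs'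
  · have hm' := mySum0 h2' hs'
    subst hm'
    have : a = 3 := by simpa using h
    rw [this]; rfl
  · exfalso
    obtain ⟨b, hb⟩ := Multiset.exists_mem_of_ne_zero (show m' ≠ 0 by rintro rfl; simp at hs')
    have h1 := Multiset.le_sum_of_mem hb
    have := h2' b hb
    omega

lemma mySum4 {m : Multiset ℕ} (h2 : ∀ x ∈ m, 2 ≤ x) (h : m.sum = 4) :
    m = {4} ∨ m = {2, 2} := by
  obtain ⟨a, ha⟩ := Multiset.exists_mem_of_ne_zero (show m ≠ 0 by rintro rfl; simp at h)
  obtain ⟨m', rfl⟩ := Multiset.exists_cons_of_mem ha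
  rw [Multiset.sum_cons] at h
  have ha2 := h2 a (Multiset.mem_cons_self a m')
  have h2' : ∀ x ∈ m', 2 ≤ x := fun x hx => h2 x (Multiset.mem_cons_of_mem hx)
  have hs' : m'.sum = 0 ∨ m'.sum = 1 ∨ m'.sum = 2 := by omega
  rcases hs' with hs' | hs' | hs'
  · have hm' := mySum0 h2' hs'
    subst hm'
    left
    have : a = 4 := by simpa using h
    rw [this]; rfl
  · exfalso
    obtain ⟨b, hb⟩ := Multiset.exists_mem_of_ne_zero (show m' ≠ 0 by rintro rfl; simp at hs')
    have h1 := Multiset.le_sum_of_mem hb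
    have := h2' b hb
    omega
  · have hm' := mySum2 h2' hs'
    subst hm'
    right
    have : a = 2 := by simp [Multiset.sum_singleton] at h; omega
    rw [this]; rfl

variable {α : Type*} [DecidableEq α] [Fintype α]

lemma myIsSwap_iff {s : Perm α} : s.cycleType = {2} ↔ s.IsSwap := by
  constructor
  · intro h
    rw [← card_support_eq_two, ← Equiv.Perm.sum_cycleType, h]; rfl
  · rintro ⟨x, y, hxy, rfl⟩
    rw [(isCycle_swap hxy).cycleType, card_support_swap hxy]

lemma myEqSwap {s : Perm α} (hs : s.IsSwap) {u v : α} (huv : u ≠ v) (h : s u = v) :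
    s = swap u v := by
  obtain ⟨a, b, hab, rfl⟩ := hs
  by_cases hua : u = a
  · subst hua
    rw [swap_apply_left] at h
    rw [h]
  · by_cases hub : u = b
    · subst hub
      rw [swap_apply_right] at h
      rw [h, swap_comm]
    · rw [swap_apply_of_ne_of_ne hua hub] at h
      exact absurd h huv

lemma myMulSelf {s : Perm α} (hs : s.IsSwap) : s * s = 1 := by
  obtain ⟨a, b, hab, rfl⟩ := hs
  exact swap_mul_self a b

lemma myInv {s : Perm α} (hs : s.IsSwap) : s⁻¹ = s := by
  obtain ⟨a, b, hab, rfl⟩ := hs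
  exact swap_inv a b

lemma mySign {s : Perm α} (hs : s.IsSwap) : sign s = -1 := by
  obtain ⟨a, b, hab, rfl⟩ := hs
  exact sign_swap hab

lemma mySwapEqOfSupport {s t : Perm α} (hs : s.IsSwap) (ht : t.IsSwap)
    (h : s.support = t.support) : s = t := by
  obtain ⟨a, b, hab, rfl⟩ := hs
  obtain ⟨c, d, hcd, rfl⟩ := ht
  rw [support_swap hab, support_swap hcd] at h
  have ha : a = c ∨ a = d := by
    have : a ∈ ({c, d} : Finset α) := h ▸ (by simp)
    simpa using this
  have hb : b = c ∨ b = d := by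
    have : b ∈ ({c, d} : Finset α) := h ▸ (by simp)
    simpa using this
  rcases ha with rfl | rfl
  · rcases hb with rfl | rfl
    · exact absurd rfl hab
    · rfl
  · rcases hb with rfl | rfl
    · exact swap_comm _ _
    · exact absurd rfl hab

lemma mySupportUnion {s t : Perm α} (hs : s.IsSwap) (ht : t.IsSwap) (hst : s * t ≠ 1) :
    (s * t).support = s.support ∪ t.support := by
  refine le_antisymm (support_mul_le s t) ?_
  intro x hx
  rw [mem_support]
  intro hfix
  by_cases hxt : x ∈ t.support
  · rw [mem_support] at hxt
    set a := t x with ha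
    have h1 : s a = x := hfix
    have hstx : a ≠ x := hxt
    have hseq : s = swap a x := myEqSwap hs hstx h1
    have hteq : t = swap x a := myEqSwap ht (Ne.symm hstx) ha.symm
    apply hst
    rw [hseq, hteq, swap_comm a x, swap_mul_self]
  · have hxs : x ∈ s.support := by
      rcases Finset.mem_union.mp hx with h | h
      · exact h
      · exact absurd h hxt
    rw [notMem_support] at hxt
    have : s x = x := by
      have h1 : s (t x) = x := hfix
      rwa [hxt] at h1
    exact (mem_support.mp hxs) this

lemma myCardSwaps (A : Finset α)
    [DecidablePred fun s : Perm α => s.IsSwap ∧ s.support ⊆ A] :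
    (univ.filter fun s : Perm α => s.IsSwap ∧ s.support ⊆ A).card = A.card.choose 2 := by
  rw [← Finset.card_powersetCard]
  apply Finset.card_bij (fun s _ => s.support)
  · intro s hs
    simp only [Finset.mem_filter] at hs
    rw [Finset.mem_powersetCard]
    exact ⟨hs.2.2, card_support_eq_two.mpr hs.2.1⟩
  · intro s hs t ht h
    simp only [Finset.mem_filter] at hs ht
    exact mySwapEqOfSupport hs.2.1 ht.2.1 h
  · intro P hP
    rw [Finset.mem_powersetCard] at hP
    obtain ⟨x, y, hxy, rfl⟩ := Finset.card_eq_two.mp hP.2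
    refine ⟨swap x y, ?_, ?_⟩
    · simp only [Finset.mem_filter, Finset.mem_univ, true_and]
      exact ⟨⟨x, y, hxy, rfl⟩, by rw [support_swap hxy]; exact hP.1⟩
    · exact support_swap hxy

lemma myClassify {s t : Perm α} (hs : s.IsSwap) (ht : t.IsSwap) (h : s * t ≠ 1) :
    (s * t).cycleType = {3} ∨ (s * t).cycleType = {2, 2} := by
  have hsupp := mySupportUnion hs ht h
  have hs2 : s.support.card = 2 := card_support_eq_two.mpr hs
  have ht2 : t.support.card = 2 := card_support_eq_two.mpr ht
  have hne : s ≠ t := by rintro rfl; exact h (myMulSelf hs)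
  have hcard_le : (s.support ∪ t.support).card ≤ 4 := by
    have := Finset.card_union_le s.support t.support
    omega
  have hcard_ge : 3 ≤ (s.support ∪ t.support).card := by
    have hsub : s.support ⊆ s.support ∪ t.support := Finset.subset_union_left
    have hne' : s.support ≠ s.support ∪ t.support := by
      intro h'
      apply hne
      apply mySwapEqOfSupport hs ht
      have ht_sub : t.support ⊆ s.support := by
        rw [h']; exact Finset.subset_union_right
      exact (Finset.eq_of_subset_of_card_le ht_sub (by omega)).symm
    have := Finset.card_lt_card (Finset.ssubset_iff_subset_ne.mpr ⟨hsub, hne'⟩)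
    omega
  have hsum : (s * t).cycleType.sum = (s.support ∪ t.support).card := by
    rw [Equiv.Perm.sum_cycleType, hsupp]
  have hsign : sign (s * t) = 1 := by
    rw [map_mul, mySign hs, mySign ht]; norm_num
  have h2 : ∀ x ∈ (s * t).cycleType, 2 ≤ x :=
    fun x hx => Equiv.Perm.two_le_of_mem_cycleType hx
  have hc : (s.support ∪ t.support).card = 3 ∨ (s.support ∪ t.support).card = 4 := by omega
  rcases hc with hc | hc
  · left; exact mySum3 h2 (by omega)
  · rcases mySum4 h2 (by omega) with hm | hm
    · exfalso
      rw [Equiv.Perm.sign_of_cycleType, hm] at hsign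
      exact absurd hsign (by decide)
    · right; exact hm

lemma mySign1 {x : Perm α} (hx : x.cycleType = {3}) : sign x = 1 := by
  rw [Equiv.Perm.sign_of_cycleType, hx]; decide

lemma mySign22 {x : Perm α} (hx : x.cycleType = {2, 2}) : sign x = 1 := by
  rw [Equiv.Perm.sign_of_cycleType, hx]; decide

lemma myThreeCase {x s : Perm α} (hx : x.cycleType = {3}) (hs : s.IsSwap)
    (hsub : s.support ⊆ x.support) : (s⁻¹ * x).IsSwap := by
  set t := s⁻¹ * x with htdef
  have ht1 : t ≠ 1 := by
    intro h1
    have : x = s := by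
      have := congrArg (fun p => s * p) h1
      simpa [htdef, mul_assoc] using this
    rw [this, myIsSwap_iff.mpr hs] at hx
    simp at hx
  have hsuppx : x.support.card = 3 := by
    rw [← Equiv.Perm.sum_cycleType, hx]; rfl
  have hsuppt : t.support ⊆ x.support := by
    refine le_trans (support_mul_le s⁻¹ x) ?_
    rw [Equiv.Perm.support_inv]
    exact Finset.union_subset hsub le_rfl
  have hcard : t.support.card ≤ 3 := by
    have := Finset.card_le_card hsuppt
    omega
  have hsum : t.cycleType.sum ≤ 3 := by
    rw [Equiv.Perm.sum_cycleType]; exact hcard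
  have h2 : ∀ y ∈ t.cycleType, 2 ≤ y := fun y hy => Equiv.Perm.two_le_of_mem_cycleType hy
  have hsumge : 2 ≤ t.cycleType.sum := by
    obtain ⟨a, ha⟩ := Multiset.exists_mem_of_ne_zero
      (show t.cycleType ≠ 0 from fun h0 => ht1 (Equiv.Perm.cycleType_eq_zero.mp h0))
    have := Multiset.le_sum_of_mem ha
    have := h2 a ha
    omega
  have hsign : sign t = -1 := by
    rw [htdef, map_mul, map_inv, mySign hs, mySign1 hx]
    norm_num
  have hc : t.cycleType.sum = 2 ∨ t.cycleType.sum = 3 := by omega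
  rcases hc with hc | hc
  · exact myIsSwap_iff.mp (mySum2 h2 hc)
  · exfalso
    rw [mySign1 (mySum3 h2 hc)] at hsign
    norm_num at hsign

lemma my22Case {x s : Perm α} (hx : x.cycleType = {2, 2}) :
    (s.IsSwap ∧ (s⁻¹ * x).IsSwap) ↔ s ∈ x.cycleFactorsFinset := by
  have hx1 : x ≠ 1 := by
    intro h1; rw [h1, Equiv.Perm.cycleType_one] at hx; simp at hx
  have hsuppx : x.support.card = 4 := by
    rw [← Equiv.Perm.sum_cycleType, hx]; rfl
  constructor
  · rintro ⟨hs, ht⟩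
    set t := s⁻¹ * x with htdef
    have hst : s * t = x := by rw [htdef, ← mul_assoc, mul_inv_cancel, one_mul]
    have hx1' : s * t ≠ 1 := hst ▸ hx1
    have hsupp : x.support = s.support ∪ t.support := by
      rw [← hst]; exact mySupportUnion hs ht hx1'
    have hs2 : s.support.card = 2 := card_support_eq_two.mpr hs
    have ht2 : t.support.card = 2 := card_support_eq_two.mpr ht
    have hdisj : s.support ∩ t.support = ∅ := by
      have h1 := Finset.card_union_add_card_inter s.support t.support
      rw [← hsupp] at h1
      rw [← Finset.card_eq_zero]
      omega
    rw [Equiv.Perm.mem_cycleFactorsFinset_iff]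
    constructor
    · obtain ⟨a, b, hab, rfl⟩ := hs
      exact isCycle_swap hab
    · intro a ha
      have hat : a ∉ t.support := by
        intro h'
        have : a ∈ s.support ∩ t.support := Finset.mem_inter.mpr ⟨ha, h'⟩
        rw [hdisj] at this
        simp at this
      rw [notMem_support] at hat
      rw [← hst]
      show s a = s (t a)
      rw [hat]
  · intro hmem
    have hs : s.IsSwap := by
      rw [← card_support_eq_two]
      have h1 : s.support.card ∈ x.cycleType := by
        rw [Equiv.Perm.cycleType_def]
        exact Multiset.mem_map_of_mem _ hmem
      rw [hx] at h1
      simpa using h1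
    refine ⟨hs, ?_⟩
    set t := s⁻¹ * x with htdef
    have hcomm : Commute s x := Equiv.Perm.self_mem_cycle_factors_commute hmem
    have hx2 : x * x = 1 := by
      have horder : orderOf x = 2 := by
        rw [← Equiv.Perm.lcm_cycleType, hx]
        decide
      have := pow_orderOf_eq_one x
      rw [horder, pow_two] at this
      exact this
    have ht1 : t ≠ 1 := by
      intro h1
      have : x = s := by
        have := congrArg (fun p => s * p) h1
        simpa [htdef, mul_assoc] using this
      rw [this, myIsSwap_iff.mpr hs] at hx
      simp at hx
    have ht2 : t * t = 1 := by
      rw [htdef, myInv hs]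
      calc s * x * (s * x) = s * (x * s) * x := by group
        _ = s * (s * x) * x := by rw [hcomm.eq]
        _ = (s * s) * (x * x) := by group
        _ = 1 := by rw [myMulSelf hs, hx2, one_mul]
    have hsign : sign t = -1 := by
      rw [htdef, map_mul, map_inv, mySign hs, mySign22 hx]
      norm_num
    have hsuppt : t.support ⊆ x.support := by
      refine le_trans (support_mul_le s⁻¹ x) ?_
      rw [Equiv.Perm.support_inv]
      exact Finset.union_subset (Equiv.Perm.mem_cycleFactorsFinset_support_le hmem) le_rfl
    have hsum : t.cycleType.sum ≤ 4 := by
      rw [Equiv.Perm.sum_cycleType]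
      have := Finset.card_le_card hsuppt
      omega
    have h2 : ∀ y ∈ t.cycleType, 2 ≤ y := fun y hy => Equiv.Perm.two_le_of_mem_cycleType hy
    have horder : orderOf t = 2 := orderOf_eq_prime (by rwa [pow_two]) ht1
    have hall2 : ∀ y ∈ t.cycleType, y = 2 := by
      intro y hy
      have hdvd : y ∣ 2 := by
        rw [← horder, ← Equiv.Perm.lcm_cycleType]
        exact Multiset.dvd_lcm hy
      have := Nat.le_of_dvd (by norm_num) hdvd
      have := h2 y hy
      omega
    have hrep : t.cycleType = Multiset.replicate (Multiset.card t.cycleType) 2 :=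
      (Multiset.eq_replicate_card ).mpr hall2
    have hcardle : Multiset.card t.cycleType ≤ 2 := by
      have hsum2 : t.cycleType.sum = Multiset.card t.cycleType * 2 := by
        rw [hrep, Multiset.sum_replicate, smul_eq_mul, Multiset.card_replicate]
      omega
    have hcardne : Multiset.card t.cycleType ≠ 0 := by
      simp only [ne_eq, Equiv.Perm.card_cycleType_eq_zero]
      exact ht1
    have hcard : Multiset.card t.cycleType = 1 ∨ Multiset.card t.cycleType = 2 := by omega
    rcases hcard with hcard | hcard
    · rw [hcard] at hrep
      exact myIsSwap_iff.mp (by rw [hrep]; rfl)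
    · exfalso
      rw [hcard] at hrep
      have : t.cycleType = {2, 2} := by rw [hrep]; rfl
      rw [mySign22 this] at hsign
      norm_num at hsign


lemma myCount (x : Perm α) [DecidablePred fun s : Perm α => s.IsSwap ∧ (s⁻¹ * x).IsSwap] :
    (univ.filter fun s : Perm α => s.IsSwap ∧ (s⁻¹ * x).IsSwap).card =
      if x.cycleType = {2, 2} then 2
      else if x.cycleType = {3} then 3
      else if x = 1 then (Fintype.card α).choose 2 else 0 := by
  classical
  by_cases hx22 : x.cycleType = {2, 2}
  · rw [if_pos hx22]
    have hset : (univ.filter fun s : Perm α => s.IsSwap ∧ (s⁻¹ * x).IsSwap)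
        = x.cycleFactorsFinset := by
      ext s
      simp only [Finset.mem_filter, Finset.mem_univ, true_and]
      exact my22Case hx22
    rw [hset]
    have h1 : Multiset.card x.cycleType = x.cycleFactorsFinset.card := by
      rw [Equiv.Perm.cycleType_def, Multiset.card_map]; rfl
    rw [hx22] at h1
    simpa using h1.symm
  · rw [if_neg hx22]
    by_cases hx3 : x.cycleType = {3}
    · rw [if_pos hx3]
      have hx1 : x ≠ 1 := by
        intro h; rw [h, Equiv.Perm.cycleType_one] at hx3; simp at hx3
      have hset : (univ.filter fun s : Perm α => s.IsSwap ∧ (s⁻¹ * x).IsSwap)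
          = univ.filter fun s : Perm α => s.IsSwap ∧ s.support ⊆ x.support := by
        apply Finset.filter_congr
        intro s _
        constructor
        · rintro ⟨hs, ht⟩
          refine ⟨hs, ?_⟩
          have hst : s * (s⁻¹ * x) = x := by group
          have hx1' : s * (s⁻¹ * x) ≠ 1 := by rw [hst]; exact hx1
          have hu := mySupportUnion hs ht hx1'
          rw [hst] at hu
          rw [hu]
          exact Finset.subset_union_left
        · rintro ⟨hs, hsub⟩
          exact ⟨hs, myThreeCase hx3 hs hsub⟩
      rw [hset, myCardSwaps]
      have h3 : x.support.card = 3 := by rw [← Equiv.Perm.sum_cycleType, hx3]; rfl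
      rw [h3]
      rfl
    · rw [if_neg hx3]
      by_cases hx1 : x = 1
      · rw [if_pos hx1]
        subst hx1
        have hset : (univ.filter fun s : Perm α => s.IsSwap ∧ (s⁻¹ * 1).IsSwap)
            = univ.filter fun s : Perm α => s.IsSwap ∧ s.support ⊆ Finset.univ := by
          apply Finset.filter_congr
          intro s _
          constructor
          · rintro ⟨hs, _⟩; exact ⟨hs, Finset.subset_univ _⟩
          · rintro ⟨hs, _⟩
            refine ⟨hs, ?_⟩
            rw [mul_one, myInv hs]
            exact hs
        rw [hset, myCardSwaps, Finset.card_univ]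
      · rw [if_neg hx1]
        rw [Finset.card_eq_zero, Finset.filter_eq_empty_iff]
        rintro s - ⟨hs, ht⟩
        have hst : s * (s⁻¹ * x) = x := by group
        have hx1' : s * (s⁻¹ * x) ≠ 1 := by rw [hst]; exact hx1
        rcases myClassify hs ht hx1' with h | h <;> rw [hst] at h
        · exact hx3 h
        · exact hx22 h


lemma myMaster (x : Perm α) :
    (∑ s ∈ univ.filter fun s : Perm α => s.cycleType = ({2} : Multiset ℕ),
      ∑ t ∈ univ.filter fun t : Perm α => t.cycleType = ({2} : Multiset ℕ),
        (if s * t = x then (1 : ℤ) else 0)) =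
      (if x.cycleType = {2, 2} then (2 : ℤ) else 0) +
      (if x.cycleType = {3} then (3 : ℤ) else 0) +
      (if x = 1 then ((Fintype.card α).choose 2 : ℤ) else 0) := by
  classical
  have hinner : ∀ s : Perm α,
      (∑ t ∈ univ.filter fun t : Perm α => t.cycleType = ({2} : Multiset ℕ),
        (if s * t = x then (1 : ℤ) else 0))
      = if (s⁻¹ * x).cycleType = ({2} : Multiset ℕ) then (1 : ℤ) else 0 := by
    intro s
    calc (∑ t ∈ univ.filter fun t : Perm α => t.cycleType = ({2} : Multiset ℕ),
        (if s * t = x then (1 : ℤ) else 0))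
        = ∑ t ∈ univ.filter fun t : Perm α => t.cycleType = ({2} : Multiset ℕ),
          (if t = s⁻¹ * x then (1 : ℤ) else 0) :=
          Finset.sum_congr rfl fun t _ => if_congr eq_inv_mul_iff_mul_eq.symm rfl rfl
      _ = if s⁻¹ * x ∈ univ.filter fun t : Perm α => t.cycleType = ({2} : Multiset ℕ)
          then (1 : ℤ) else 0 := Finset.sum_ite_eq' _ _ _
      _ = if (s⁻¹ * x).cycleType = ({2} : Multiset ℕ) then (1 : ℤ) else 0 := by
          simp [Finset.mem_filter]
  rw [Finset.sum_congr rfl fun s _ => hinner s]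
  rw [Finset.sum_boole]
  rw [Finset.filter_filter]
  rw [Finset.filter_congr (fun s _ => by
    rw [myIsSwap_iff, myIsSwap_iff] :
    ∀ s ∈ (univ : Finset (Perm α)),
      (s.cycleType = ({2} : Multiset ℕ) ∧ (s⁻¹ * x).cycleType = ({2} : Multiset ℕ))
        ↔ (s.IsSwap ∧ (s⁻¹ * x).IsSwap))]
  rw [myCount x]
  rcases eq_or_ne x.cycleType {2, 2} with h1 | h1
  · have h2 : x.cycleType ≠ {3} := by rw [h1]; decide
    have h3 : x ≠ 1 := by
      intro h; rw [h, Equiv.Perm.cycleType_one] at h1; simp at h1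
    simp only [if_pos h1, if_neg h2, if_neg h3]
    norm_num
  · rcases eq_or_ne x.cycleType {3} with h2 | h2
    · have h3 : x ≠ 1 := by
        intro h; rw [h, Equiv.Perm.cycleType_one] at h2; simp at h2
      simp only [if_neg h1, if_pos h2, if_neg h3]
      norm_num
    · rcases eq_or_ne x 1 with h3 | h3
      · simp only [if_neg h1, if_neg h2, if_pos h3]
        push_cast
        ring
      · simp only [if_neg h1, if_neg h2, if_neg h3]
        norm_num


end MyAux


open Finset

noncomputable section

/-- The sum, in the integral group algebra of `S_n`, of all permutations with
a given cycle type. -/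
def cycleTypeSum (n : ℕ) (m : Multiset ℕ) : MonoidAlgebra ℤ (Equiv.Perm (Fin n)) :=
  ∑ g : Equiv.Perm (Fin n),
    if Equiv.Perm.cycleType g = m then MonoidAlgebra.single g (1 : ℤ) else 0

/-- In `Z[S_n]`, the square of the sum `T` of all transpositions equals
`2·X_{(1,1)} + 3·X_{(2)} + C(n,2)·1`, where `X_{(1,1)}` is the sum of all
products of two disjoint transpositions (cycle type `{2,2}`), `X_{(2)}` is the
sum of all 3-cycles (cycle type `{3}`), and `C(n,2) = n(n-1)/2`. -/
theorem transpositions_squared (n : ℕ) :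
    cycleTypeSum n {2} * cycleTypeSum n {2} =
      2 * cycleTypeSum n {2, 2} + 3 * cycleTypeSum n {3} +
        (n.choose 2 : ℤ) • (1 : MonoidAlgebra ℤ (Equiv.Perm (Fin n))) := by
  have hexp : ∀ m : Multiset ℕ, cycleTypeSum n m
      = ∑ g ∈ univ.filter fun g : Equiv.Perm (Fin n) => g.cycleType = m,
          MonoidAlgebra.single g (1 : ℤ) :=
    fun m => (Finset.sum_filter _ _).symm
  have h2m : (2 : MonoidAlgebra ℤ (Equiv.Perm (Fin n))) * cycleTypeSum n {2, 2}
      = cycleTypeSum n {2, 2} + cycleTypeSum n {2, 2} := two_mul _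
  have h3m : (3 : MonoidAlgebra ℤ (Equiv.Perm (Fin n))) * cycleTypeSum n {3}
      = cycleTypeSum n {3} + cycleTypeSum n {3} + cycleTypeSum n {3} := by
    rw [show (3 : MonoidAlgebra ℤ (Equiv.Perm (Fin n))) = 2 + 1 by norm_num,
      add_mul, two_mul, one_mul, add_assoc]
  rw [h2m, h3m]
  rw [hexp, hexp, hexp]
  rw [Finset.sum_mul_sum]
  simp only [MonoidAlgebra.single_mul_single, one_mul]
  refine MonoidAlgebra.ext (Finsupp.ext fun x => ?_)
  have hX : ∀ (F : Finset (Equiv.Perm (Fin n))),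
      ((∑ g ∈ F, MonoidAlgebra.single g (1 : ℤ)) : MonoidAlgebra ℤ (Equiv.Perm (Fin n))).coeff x
        = if x ∈ F then (1 : ℤ) else 0 := by
    intro F
    rw [MonoidAlgebra.coeff_sum, Finset.sum_apply']
    simp only [MonoidAlgebra.coeff_single]
    rw [Finset.sum_congr rfl fun g _ => Finsupp.single_apply]
    exact Finset.sum_ite_eq' F x (fun _ => (1 : ℤ))
  have hL : ((∑ s ∈ univ.filter fun s : Equiv.Perm (Fin n) => s.cycleType = ({2} : Multiset ℕ),
      ∑ t ∈ univ.filter fun t : Equiv.Perm (Fin n) => t.cycleType = ({2} : Multiset ℕ),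
        MonoidAlgebra.single (s * t) (1 : ℤ)) : MonoidAlgebra ℤ (Equiv.Perm (Fin n))).coeff x
      = ∑ s ∈ univ.filter fun s : Equiv.Perm (Fin n) => s.cycleType = ({2} : Multiset ℕ),
        ∑ t ∈ univ.filter fun t : Equiv.Perm (Fin n) => t.cycleType = ({2} : Multiset ℕ),
          (if s * t = x then (1 : ℤ) else 0) := by
    rw [MonoidAlgebra.coeff_sum, Finset.sum_apply']
    refine Finset.sum_congr rfl fun s _ => ?_
    rw [MonoidAlgebra.coeff_sum, Finset.sum_apply']
    exact Finset.sum_congr rfl fun t _ => Finsupp.single_apply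
  simp only [MonoidAlgebra.coeff_add, MonoidAlgebra.coeff_smul]
  rw [Finsupp.add_apply, Finsupp.add_apply, Finsupp.add_apply, Finsupp.add_apply,
    Finsupp.add_apply, Finsupp.smul_apply]
  rw [hL, hX, hX, myMaster x]
  have hone : (1 : MonoidAlgebra ℤ (Equiv.Perm (Fin n))).coeff x
      = if x = 1 then (1 : ℤ) else 0 := by
    rw [MonoidAlgebra.one_def, MonoidAlgebra.coeff_single, Finsupp.single_apply]
    simp only [eq_comm]
  rw [hone]
  have hcard : Fintype.card (Fin n) = n := Fintype.card_fin n
  rw [hcard]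
  simp only [Finset.mem_filter, Finset.mem_univ, true_and]
  by_cases h1 : x.cycleType = ({2, 2} : Multiset ℕ) <;>
    by_cases h2 : x.cycleType = ({3} : Multiset ℕ) <;>
      by_cases h3 : x = 1 <;>
        simp [h1, h2, h3, smul_eq_mul] <;> (try ring) <;> (split_ifs <;> ring)
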